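/- arXiv:2507.01898 — 5 statements merged into one kernel-verified Lean document; each statement's English description precedes it below -/
import Mathlib

section
/- Let n ≥ 4 with n ≡ 1 (mod 3) (so that f_{n+2}, f_{n−1} and f_{n+5} are even and f_{n−2} + f_n is even). Then the following three identities hold: (1) (f_{n+5}/2)·f_n² = (f_{n−1}/2)·f_{n+1}² + ((f_{n−2} + f_n)/2)·f_{n+2}²; (2) (f_{n+2}/2)·f_{n+1}² = (f_{n+2}/2)·f_n² + (f_{n−1}/2)·f_{n+2}²; (3) f_n·f_{n+2}² = f_{n+3}·f_n² + f_n·f_{n+1}². -/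
open Nat

theorem fib_sq_identities_of_mod_three_eq_one (n : ℕ) (hn : 4 ≤ n) (h3 : n % 3 = 1) :
    (fib (n + 5) / 2) * fib n ^ 2 =
      (fib (n - 1) / 2) * fib (n + 1) ^ 2 + ((fib (n - 2) + fib n) / 2) * fib (n + 2) ^ 2 ∧
    (fib (n + 2) / 2) * fib (n + 1) ^ 2 =
      (fib (n + 2) / 2) * fib n ^ 2 + (fib (n - 1) / 2) * fib (n + 2) ^ 2 ∧
    fib n * fib (n + 2) ^ 2 = fib (n + 3) * fib n ^ 2 + fib n * fib (n + 1) ^ 2 := by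
  obtain ⟨m, rfl⟩ : ∃ m, n = m + 4 := ⟨n - 4, by omega⟩
  have hd : 3 ∣ m := by omega
  obtain ⟨j, hj⟩ : ∃ j, fib m = j + j := by
    have h2 : 2 ∣ fib m := by
      have := Nat.fib_dvd 3 m hd
      simpa [show fib 3 = 2 from rfl] using this
    obtain ⟨j, hj⟩ := h2
    exact ⟨j, by omega⟩
  set y := fib (m + 1) with hy
  have e2 : fib (m + 2) = 2 * j + y := by
    rw [show m + 2 = m + 2 from rfl, Nat.fib_add_two]; omega
  have e3 : fib (m + 3) = 2 * j + 2 * y := by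
    have : fib (m + 3) = fib (m + 1) + fib (m + 2) := by
      rw [show m + 3 = (m + 1) + 2 from rfl, Nat.fib_add_two]
    omega
  have e4 : fib (m + 4) = 4 * j + 3 * y := by
    have : fib (m + 4) = fib (m + 2) + fib (m + 3) := by
      rw [show m + 4 = (m + 2) + 2 from rfl, Nat.fib_add_two]
    omega
  have e5 : fib (m + 5) = 6 * j + 5 * y := by
    have : fib (m + 5) = fib (m + 3) + fib (m + 4) := by
      rw [show m + 5 = (m + 3) + 2 from rfl, Nat.fib_add_two]
    omega
  have e6 : fib (m + 6) = 10 * j + 8 * y := by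
    have : fib (m + 6) = fib (m + 4) + fib (m + 5) := by
      rw [show m + 6 = (m + 4) + 2 from rfl, Nat.fib_add_two]
    omega
  have e7 : fib (m + 7) = 16 * j + 13 * y := by
    have : fib (m + 7) = fib (m + 5) + fib (m + 6) := by
      rw [show m + 7 = (m + 5) + 2 from rfl, Nat.fib_add_two]
    omega
  have e8 : fib (m + 8) = 26 * j + 21 * y := by
    have : fib (m + 8) = fib (m + 6) + fib (m + 7) := by
      rw [show m + 8 = (m + 6) + 2 from rfl, Nat.fib_add_two]
    omega
  have e9 : fib (m + 9) = 42 * j + 34 * y := by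
    have : fib (m + 9) = fib (m + 7) + fib (m + 8) := by
      rw [show m + 9 = (m + 7) + 2 from rfl, Nat.fib_add_two]
    omega
  have i1 : m + 4 - 1 = m + 3 := by omega
  have i2 : m + 4 - 2 = m + 2 := by omega
  have a1 : m + 4 + 5 = m + 9 := by omega
  have a2 : m + 4 + 1 = m + 5 := by omega
  have a3 : m + 4 + 2 = m + 6 := by omega
  have a4 : m + 4 + 3 = m + 7 := by omega
  rw [i1, i2, a1, a2, a3, a4, e2, e3, e4, e5, e6, e7, e9]
  have d1 : (42 * j + 34 * y) / 2 = 21 * j + 17 * y := by omega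
  have d2 : (2 * j + 2 * y) / 2 = j + y := by omega
  have d3 : (2 * j + y + (4 * j + 3 * y)) / 2 = 3 * j + 2 * y := by omega
  have d4 : (10 * j + 8 * y) / 2 = 5 * j + 4 * y := by omega
  rw [d1, d2, d3, d4]
  refine ⟨by ring, by ring, by ring⟩
end

section
/- For every integer n ≥ 8, the following three identities hold: (1) f_{n+4}·f_n² = f_{n+1}·f_{n+1}² + f_{n−2}·f_{n+2}²; (2) f_{n+2}·f_{n+1}² = f_{n+2}·f_n² + f_{n−1}·f_{n+2}²; (3) f_n·f_{n+2}² = f_{n+3}·f_n² + f_n·f_{n+1}². -/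
open Nat

theorem fib_sq_identities (n : ℕ) (hn : 8 ≤ n) :
    fib (n + 4) * fib n ^ 2 = fib (n + 1) * fib (n + 1) ^ 2 + fib (n - 2) * fib (n + 2) ^ 2 ∧
    fib (n + 2) * fib (n + 1) ^ 2 = fib (n + 2) * fib n ^ 2 + fib (n - 1) * fib (n + 2) ^ 2 ∧
    fib n * fib (n + 2) ^ 2 = fib (n + 3) * fib n ^ 2 + fib n * fib (n + 1) ^ 2 := by
  obtain ⟨m, rfl⟩ : ∃ m, n = m + 2 := ⟨n - 2, by omega⟩
  have h1 : m + 2 - 2 = m := by omega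
  have h2 : m + 2 - 1 = m + 1 := by omega
  rw [h1, h2]
  have e3 : fib (m + 3) = fib m + 2 * fib (m + 1) := by
    rw [show m + 3 = m + 1 + 2 from rfl, fib_add_two, fib_add_two]; ring
  have e4 : fib (m + 4) = 2 * fib m + 3 * fib (m + 1) := by
    rw [show m + 4 = m + 2 + 2 from rfl, fib_add_two, e3, fib_add_two]; ring
  have e5 : fib (m + 5) = 3 * fib m + 5 * fib (m + 1) := by
    rw [show m + 5 = m + 3 + 2 from rfl, fib_add_two, e4, e3]; ring
  have e6 : fib (m + 6) = 5 * fib m + 8 * fib (m + 1) := by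
    rw [show m + 6 = m + 4 + 2 from rfl, fib_add_two, e5, e4]; ring
  rw [show m + 2 + 4 = m + 6 from rfl, show m + 2 + 1 = m + 3 from rfl,
    show m + 2 + 2 = m + 4 from rfl, show m + 2 + 3 = m + 5 from rfl,
    e3, e4, e5, e6, fib_add_two]
  refine ⟨by ring, by ring, by ring⟩
end

section
/- For every integer n ≥ 4: gcd(f_n², f_{n+1}²) = gcd(f_n², f_{n+2}²) = gcd(f_{n+1}², f_{n+2}²) = 1, and none of f_n², f_{n+1}², f_{n+2}² can be written as a non-negative integer linear combination of the other two; in particular, there exist no λ, μ ∈ ℕ with f_{n+2}² = λ·f_n² + μ·f_{n+1}². Consequently S(n) is a numerical semigroup whose minimal system of generators is {f_n², f_{n+1}², f_{n+2}²}, i.e. S(n) has embedding dimension 3. -/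
open Nat

private lemma mem_closure_triple {p q r x : ℕ} :
    x ∈ AddSubmonoid.closure ({p, q, r} : Set ℕ) ↔
      ∃ i j k : ℕ, x = i * p + j * q + k * r := by
  have hs : ({p, q, r} : Set ℕ) = {p} ∪ {q, r} := by
    rw [Set.insert_eq]
  rw [hs, AddSubmonoid.closure_union, AddSubmonoid.mem_sup]
  constructor
  · rintro ⟨y, hy, z, hz, rfl⟩
    rw [AddSubmonoid.mem_closure_singleton] at hy
    rw [AddSubmonoid.mem_closure_pair] at hz
    obtain ⟨i, rfl⟩ := hy
    obtain ⟨j, k, rfl⟩ := hz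
    exact ⟨i, j, k, by simp [smul_eq_mul, add_assoc]⟩
  · rintro ⟨i, j, k, rfl⟩
    refine ⟨i * p, ?_, j * q + k * r, ?_, by ring⟩
    · rw [AddSubmonoid.mem_closure_singleton]; exact ⟨i, by simp [smul_eq_mul]⟩
    · rw [AddSubmonoid.mem_closure_pair]; exact ⟨j, k, by simp [smul_eq_mul]⟩

private lemma filter_pos_sum (l : Multiset ℕ) :
    (l.filter (0 < ·)).sum = l.sum := by
  induction l using Multiset.induction_on with
  | empty => simp
  | cons a s ih =>
    by_cases ha : 0 < a
    · rw [Multiset.filter_cons_of_pos _ ha, Multiset.sum_cons, ih, Multiset.sum_cons]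
    · rw [Multiset.filter_cons_of_neg _ ha, ih, Multiset.sum_cons]
      omega

set_option maxHeartbeats 1000000 in
theorem Sn_numerical_semigroup_embdim_three (n : ℕ) (hn : 4 ≤ n) :
    Nat.gcd (fib n ^ 2) (fib (n + 1) ^ 2) = 1 ∧
    Nat.gcd (fib n ^ 2) (fib (n + 2) ^ 2) = 1 ∧
    Nat.gcd (fib (n + 1) ^ 2) (fib (n + 2) ^ 2) = 1 ∧
    (¬∃ l m : ℕ, fib n ^ 2 = l * fib (n + 1) ^ 2 + m * fib (n + 2) ^ 2) ∧
    (¬∃ l m : ℕ, fib (n + 1) ^ 2 = l * fib n ^ 2 + m * fib (n + 2) ^ 2) ∧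
    (¬∃ l m : ℕ, fib (n + 2) ^ 2 = l * fib n ^ 2 + m * fib (n + 1) ^ 2) ∧
    {x : ℕ |
      x ∉ AddSubmonoid.closure ({fib n ^ 2, fib (n + 1) ^ 2, fib (n + 2) ^ 2} : Set ℕ)}.Finite ∧
    (∀ A : Set ℕ,
      AddSubmonoid.closure A =
        AddSubmonoid.closure ({fib n ^ 2, fib (n + 1) ^ 2, fib (n + 2) ^ 2} : Set ℕ) →
      ({fib n ^ 2, fib (n + 1) ^ 2, fib (n + 2) ^ 2} : Set ℕ) ⊆ A) ∧
    ({fib n ^ 2, fib (n + 1) ^ 2, fib (n + 2) ^ 2} : Finset ℕ).card = 3 := by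
  set a := fib n with ha_def
  set b := fib (n + 1) with hb_def
  have hfib2 : fib (n + 2) = a + b := by
    rw [Nat.fib_add_two, ha_def, hb_def, add_comm]
  have cop : Nat.Coprime a b := Nat.fib_coprime_fib_succ n
  have ha3 : 3 ≤ a := by
    have := Nat.fib_mono hn
    have h4 : fib 4 = 3 := rfl
    simpa [ha_def, h4] using this
  have hab : a < b := by
    have : fib n < fib (n + 1) := Nat.fib_lt_fib_succ (by omega)
    simpa [ha_def, hb_def] using this
  have hb0 : 0 < b := by omega
  have cop2 : Nat.Coprime a (a + b) := by
    rw [Nat.add_comm]; exact Nat.coprime_add_self_right.mpr cop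
  have cop3 : Nat.Coprime b (a + b) :=
    Nat.coprime_add_self_right.mpr cop.symm
  have hpq : a ^ 2 < b ^ 2 := Nat.pow_lt_pow_left hab two_ne_zero
  have hqr : b ^ 2 < (a + b) ^ 2 := Nat.pow_lt_pow_left (by omega) two_ne_zero
  have hpr : a ^ 2 < (a + b) ^ 2 := lt_trans hpq hqr
  have hp9 : 9 ≤ a ^ 2 := by
    have := Nat.mul_le_mul ha3 ha3
    have ha2 : a ^ 2 = a * a := sq a
    omega
  have habb : a * b < b ^ 2 := by
    have := Nat.mul_lt_mul_of_pos_right hab hb0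
    have hb2 : b ^ 2 = b * b := sq b
    omega
  have copQ : Nat.Coprime (a ^ 2) (b ^ 2) := Nat.Coprime.pow 2 2 cop
  have copR : Nat.Coprime (a ^ 2) ((a + b) ^ 2) := Nat.Coprime.pow 2 2 cop2
  have copR' : Nat.Coprime (b ^ 2) ((a + b) ^ 2) := Nat.Coprime.pow 2 2 cop3
  -- statement 5 : b^2 not representable
  have h5 : ¬∃ l m : ℕ, b ^ 2 = l * a ^ 2 + m * (a + b) ^ 2 := by
    rintro ⟨l, m, h⟩
    rcases Nat.eq_zero_or_pos m with rfl | hm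
    · simp only [Nat.zero_mul, Nat.add_zero] at h
      have hdvd : a ^ 2 ∣ b ^ 2 := ⟨l, by rw [h, Nat.mul_comm]⟩
      have := copQ.eq_one_of_dvd hdvd
      omega
    · have : (a + b) ^ 2 ≤ m * (a + b) ^ 2 := Nat.le_mul_of_pos_left _ hm
      omega
  -- statement 6 : (a+b)^2 not representable
  have h6 : ¬∃ l m : ℕ, (a + b) ^ 2 = l * a ^ 2 + m * b ^ 2 := by
    rintro ⟨l, m, h⟩
    have hexp : (a + b) ^ 2 = a ^ 2 + 2 * (a * b) + b ^ 2 := by ring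
    rcases Nat.eq_zero_or_pos m with rfl | hm
    · simp only [Nat.zero_mul, Nat.add_zero] at h
      have hdvd : a ∣ (a + b) ^ 2 := ⟨l * a, by rw [h]; ring⟩
      have := (cop2.pow_right 2).eq_one_of_dvd hdvd
      omega
    · obtain ⟨m', rfl⟩ : ∃ m', m = m' + 1 := ⟨m - 1, by omega⟩
      have heq : l * a ^ 2 + m' * b ^ 2 = a ^ 2 + 2 * (a * b) := by
        have h' : (m' + 1) * b ^ 2 = m' * b ^ 2 + b ^ 2 := by ring
        omega
      have hda : a ∣ m' * b ^ 2 := by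
        have h1 : a ∣ l * a ^ 2 + m' * b ^ 2 := ⟨a + 2 * b, by rw [heq]; ring⟩
        have h2 : a ∣ l * a ^ 2 := ⟨l * a, by ring⟩
        have := Nat.dvd_sub h1 h2
        simpa using this
      have hdm' : a ∣ m' := (cop.pow_right 2).dvd_of_dvd_mul_right hda
      rcases Nat.eq_zero_or_pos m' with rfl | hm'
      · simp only [Nat.zero_mul, Nat.add_zero] at heq
        have hl1 : 1 ≤ l := by
          rcases Nat.eq_zero_or_pos l with rfl | h' 
          · simp at heq; omega
          · exact h'
        have hla : (l - 1) * a ^ 2 = 2 * (a * b) := by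
          have e0 : (l - 1) * a ^ 2 + 1 * a ^ 2 = l * a ^ 2 := by
            rw [← Nat.add_mul]; congr 1; omega
          omega
        have e : a * ((l - 1) * a) = a * (2 * b) :=
          calc a * ((l - 1) * a) = (l - 1) * a ^ 2 := by ring
            _ = 2 * (a * b) := hla
            _ = a * (2 * b) := by ring
        have key : (l - 1) * a = 2 * b := Nat.eq_of_mul_eq_mul_left (by omega) e
        have hd2 : a ∣ 2 * b := Dvd.intro_left _ key
        have : a ∣ 2 := cop.dvd_of_dvd_mul_right hd2
        have := Nat.le_of_dvd (by norm_num) this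
        omega
      · have ham' : a ≤ m' := Nat.le_of_dvd hm' hdm'
        have h3 : 3 * b ^ 2 ≤ m' * b ^ 2 := Nat.mul_le_mul_right _ (by omega)
        omega
  refine ⟨copQ, ?_, ?_, ?_, ?_, ?_, ?_, ?_, ?_⟩
  · rw [hfib2]; exact copR
  · rw [hfib2]; exact copR'
  · -- a^2 not representable
    rw [hfib2]
    rintro ⟨l, m, h⟩
    rcases Nat.eq_zero_or_pos l with rfl | hl
    · rcases Nat.eq_zero_or_pos m with rfl | hm
      · simp at h; omega
      · have : (a + b) ^ 2 ≤ m * (a + b) ^ 2 := Nat.le_mul_of_pos_left _ hm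
        omega
    · have : b ^ 2 ≤ l * b ^ 2 := Nat.le_mul_of_pos_left _ hl
      omega
  · rw [hfib2]; exact h5
  · rw [hfib2]; exact h6
  · -- finiteness of complement
    rw [hfib2]
    have hFr := frobeniusNumber_pair copQ (by omega) (by omega)
    apply Set.Finite.subset (Set.finite_Iic (a ^ 2 * b ^ 2 - a ^ 2 - b ^ 2))
    intro x hx
    simp only [Set.mem_setOf_eq] at hx
    apply hFr.2
    simp only [Set.mem_setOf_eq]
    intro hmem
    apply hx
    have hsub : ({a ^ 2, b ^ 2} : Set ℕ) ⊆ {a ^ 2, b ^ 2, (a + b) ^ 2} :=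
      Set.insert_subset_insert (Set.singleton_subset_iff.mpr (Set.mem_insert _ _))
    exact AddSubmonoid.closure_mono hsub hmem
  · -- minimality of generating set
    rw [hfib2]
    intro A hA x hx
    have hxcl : x ∈ AddSubmonoid.closure A := by
      rw [hA]; exact AddSubmonoid.subset_closure hx
    obtain ⟨l, hl, hsum⟩ := AddSubmonoid.exists_multiset_of_mem_closure hxcl
    set l' := l.filter (0 < ·) with hl'_def
    have hsum' : l'.sum = x := by rw [hl'_def, filter_pos_sum, hsum]
    have hl'A : ∀ y ∈ l', y ∈ A := fun y hy => hl y (Multiset.mem_of_mem_filter hy)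
    have hl'pos : ∀ y ∈ l', 0 < y := fun y hy => (Multiset.of_mem_filter hy)
    simp only [Set.mem_insert_iff, Set.mem_singleton_iff] at hx
    have hx0 : 0 < x := by
      rcases hx with h | h | h <;> rw [h] <;> omega
    rcases Multiset.empty_or_exists_mem l' with he | ⟨y, hy⟩
    · rw [he] at hsum'; simp at hsum'; omega
    obtain ⟨l'', hcons⟩ := Multiset.exists_cons_of_mem hy
    have hyA : y ∈ A := hl'A y hy
    rcases Nat.eq_zero_or_pos l''.sum with hz0 | hzpos
    · rw [hcons, Multiset.sum_cons, hz0] at hsum'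
      simp only [Nat.add_zero] at hsum'
      rw [← hsum']; exact hyA
    · exfalso
      have hycl : y ∈ AddSubmonoid.closure ({a ^ 2, b ^ 2, (a + b) ^ 2} : Set ℕ) := by
        rw [← hA]; exact AddSubmonoid.subset_closure hyA
      have hzcl : l''.sum ∈ AddSubmonoid.closure ({a ^ 2, b ^ 2, (a + b) ^ 2} : Set ℕ) := by
        rw [← hA]
        exact AddSubmonoid.multiset_sum_mem _ _ fun z hz =>
          AddSubmonoid.subset_closure (hl'A z (by rw [hcons]; exact Multiset.mem_cons_of_mem hz))
      obtain ⟨i1, j1, k1, hy1⟩ := mem_closure_triple.mp hycl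
      obtain ⟨i2, j2, k2, hz1⟩ := mem_closure_triple.mp hzcl
      have hypos : 0 < y := hl'pos y hy
      have hc1 : 1 ≤ i1 + j1 + k1 := by
        by_contra hc
        push_neg at hc
        have h0 : i1 = 0 ∧ j1 = 0 ∧ k1 = 0 := by omega
        rw [h0.1, h0.2.1, h0.2.2] at hy1
        simp at hy1
        omega
      have hc2 : 1 ≤ i2 + j2 + k2 := by
        by_contra hc
        push_neg at hc
        have h0 : i2 = 0 ∧ j2 = 0 ∧ k2 = 0 := by omega
        rw [h0.1, h0.2.1, h0.2.2] at hz1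
        simp at hz1
        omega
      have hxeq : x = (i1 + i2) * a ^ 2 + (j1 + j2) * b ^ 2 + (k1 + k2) * (a + b) ^ 2 := by
        rw [← hsum', hcons, Multiset.sum_cons, hy1, hz1]; ring
      set I := i1 + i2 with hI_def
      set J := j1 + j2 with hJ_def
      set K := k1 + k2 with hK_def
      have hIJK : 2 ≤ I + J + K := by omega
      rcases hx with h | h | h <;> rw [h] at hxeq
      · -- x = a^2
        have h1 : (I + J + K) * a ^ 2 ≤ I * a ^ 2 + J * b ^ 2 + K * (a + b) ^ 2 := by
          have e1 : J * a ^ 2 ≤ J * b ^ 2 := Nat.mul_le_mul_left _ (le_of_lt hpq)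
          have e2 : K * a ^ 2 ≤ K * (a + b) ^ 2 := Nat.mul_le_mul_left _ (le_of_lt hpr)
          calc (I + J + K) * a ^ 2 = I * a ^ 2 + J * a ^ 2 + K * a ^ 2 := by ring
            _ ≤ I * a ^ 2 + J * b ^ 2 + K * (a + b) ^ 2 := by omega
        have h2 : 2 * a ^ 2 ≤ (I + J + K) * a ^ 2 := Nat.mul_le_mul_right _ hIJK
        omega
      · -- x = b^2
        rcases Nat.eq_zero_or_pos K with hK | hK
        · rw [hK, Nat.zero_mul, Nat.add_zero] at hxeq
          rcases Nat.eq_zero_or_pos J with hJ | hJ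
          · rw [hJ, Nat.zero_mul, Nat.add_zero] at hxeq
            exact h5 ⟨I, 0, by simpa using hxeq⟩
          · rcases Nat.lt_or_ge J 2 with hJ2 | hJ2
            · have hJ1 : J = 1 := by omega
              rw [hJ1, Nat.one_mul] at hxeq
              have hI0 : I * a ^ 2 = 0 := by omega
              have hI : I = 0 := by
                rcases Nat.mul_eq_zero.mp hI0 with h' | h' <;> omega
              omega
            · have : 2 * b ^ 2 ≤ J * b ^ 2 := Nat.mul_le_mul_right _ hJ2
              omega
        · have : (a + b) ^ 2 ≤ K * (a + b) ^ 2 := Nat.le_mul_of_pos_left _ hK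
          omega
      · -- x = (a+b)^2
        rcases Nat.eq_zero_or_pos K with hK | hK
        · rw [hK, Nat.zero_mul, Nat.add_zero] at hxeq
          exact h6 ⟨I, J, hxeq⟩
        · obtain ⟨K', hK'⟩ : ∃ K', K = K' + 1 := ⟨K - 1, by omega⟩
          rw [hK'] at hxeq
          have hsplit : (K' + 1) * (a + b) ^ 2 = K' * (a + b) ^ 2 + (a + b) ^ 2 := by ring
          have hI0 : I * a ^ 2 = 0 := by omega
          have hJ0 : J * b ^ 2 = 0 := by omega
          have hK'0 : K' * (a + b) ^ 2 = 0 := by omega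
          have hI : I = 0 := by rcases Nat.mul_eq_zero.mp hI0 with h' | h' <;> omega
          have hJ : J = 0 := by rcases Nat.mul_eq_zero.mp hJ0 with h' | h' <;> omega
          have hK'' : K' = 0 := by
            rcases Nat.mul_eq_zero.mp hK'0 with h' | h' <;> omega
          omega
  · -- cardinality
    rw [hfib2]
    have h1 : a ^ 2 ≠ b ^ 2 := by omega
    have h2 : a ^ 2 ≠ (a + b) ^ 2 := by omega
    have h3 : b ^ 2 ≠ (a + b) ^ 2 := by omega
    rw [Finset.card_insert_of_notMem (by simp [h1, h2]),
        Finset.card_insert_of_notMem (by simp [h3]), Finset.card_singleton]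
end

section
/- If n ≥ 4 is even, then f_{n+1}²·(f_n·f_{n−3} + 1) > f_{n+2}². If n ≥ 7 is odd, then f_{n+1}²·(f_n·f_{n−6} + 4) > f_{n+2}². -/
open Nat

theorem fib_sq_br_gt_cq (n : ℕ) :
    (4 ≤ n → Even n → fib (n + 1) ^ 2 * (fib n * fib (n - 3) + 1) > fib (n + 2) ^ 2) ∧
    (7 ≤ n → Odd n → fib (n + 1) ^ 2 * (fib n * fib (n - 6) + 4) > fib (n + 2) ^ 2) := by
  have key : ∀ m : ℕ, 2 ≤ m → fib (m + 2) ^ 2 < 4 * fib (m + 1) ^ 2 := by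
    intro m hm
    have h1 : fib m < fib (m + 1) := Nat.fib_lt_fib_succ hm
    have h2 : fib (m + 2) < 2 * fib (m + 1) := by
      rw [Nat.fib_add_two]; omega
    calc fib (m + 2) ^ 2 < (2 * fib (m + 1)) ^ 2 := by
          apply Nat.pow_lt_pow_left h2; norm_num
      _ = 4 * fib (m + 1) ^ 2 := by ring
  constructor
  · intro hn _
    have h3 : 3 ≤ fib n := by
      have : fib 4 ≤ fib n := Nat.fib_mono hn
      simpa [show fib 4 = 3 from rfl] using this
    have h4 : 1 ≤ fib (n - 3) := by
      have : 1 = fib 1 := rfl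
      rw [this]; exact Nat.fib_mono (by omega)
    have h5 : 4 ≤ fib n * fib (n - 3) + 1 := by
      have := Nat.mul_le_mul h3 h4; omega
    calc fib (n + 2) ^ 2 < 4 * fib (n + 1) ^ 2 := key n (by omega)
      _ ≤ fib (n + 1) ^ 2 * (fib n * fib (n - 3) + 1) := by
          rw [mul_comm]; exact Nat.mul_le_mul_left _ h5
  · intro hn _
    have h5 : 4 ≤ fib n * fib (n - 6) + 4 := by omega
    calc fib (n + 2) ^ 2 < 4 * fib (n + 1) ^ 2 := key n (by omega)
      _ ≤ fib (n + 1) ^ 2 * (fib n * fib (n - 6) + 4) := by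
          rw [mul_comm]; exact Nat.mul_le_mul_left _ h5
end

section
/- If n ≥ 8 is even, then f_n² − (f_n·f_{n−3} + 1) = 3·(f_n·f_{n−3} + 1) + (f_n·f_{n−6} − 4) with 0 < f_n·f_{n−6} − 4 < f_n·f_{n−3} + 1; in particular the residue of f_n² − (f_n·f_{n−3} + 1) modulo f_n·f_{n−3} + 1 is f_n·f_{n−6} − 4. If n ≥ 11 is odd, then f_n² − (2·f_n·f_{n−2} + 1) = 4·(f_n·f_{n−6} + 4) + (f_n·f_{n−9} − 17) with 0 < f_n·f_{n−9} − 17 < f_n·f_{n−6} + 4; in particular the residue of f_n² − (2·f_n·f_{n−2} + 1) modulo f_n·f_{n−6} + 4 is f_n·f_{n−9} − 17. -/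
open Nat

lemma fibZ8 (m : ℕ) : (fib (m+8) : ℤ) = 13 * fib m + 21 * fib (m+1) := by
  simp [show m+8 = m+6+2 from rfl, show m+6=m+4+2 from rfl, show m+4=m+2+2 from rfl,
    Nat.fib_add_two]; ring

lemma fibZ11 (m : ℕ) : (fib (m+11) : ℤ) = 55 * fib m + 89 * fib (m+1) := by
  simp [show m+11 = m+9+2 from rfl, show m+9=m+7+2 from rfl, show m+7=m+5+2 from rfl,
    show m+5=m+3+2 from rfl, show m+3=m+1+2 from rfl, Nat.fib_add_two]; ring

lemma fibZ9 (m : ℕ) : (fib (m+9) : ℤ) = 21 * fib m + 34 * fib (m+1) := by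
  simp [show m+9=m+7+2 from rfl, show m+7=m+5+2 from rfl,
    show m+5=m+3+2 from rfl, show m+3=m+1+2 from rfl, Nat.fib_add_two]; ring

lemma fibZ5 (m : ℕ) : (fib (m+5) : ℤ) = 3 * fib m + 5 * fib (m+1) := by
  simp [show m+5=m+3+2 from rfl, show m+3=m+1+2 from rfl, Nat.fib_add_two]; ring

lemma fibZ2 (m : ℕ) : (fib (m+2) : ℤ) = fib m + fib (m+1) := by
  simp [Nat.fib_add_two]

theorem fib_sq_euclidean_step (n : ℕ) :
    (8 ≤ n → Even n →
      (fib n : ℤ) ^ 2 - ((fib n : ℤ) * (fib (n - 3) : ℤ) + 1) =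
        3 * ((fib n : ℤ) * (fib (n - 3) : ℤ) + 1) + ((fib n : ℤ) * (fib (n - 6) : ℤ) - 4) ∧
      0 < (fib n : ℤ) * (fib (n - 6) : ℤ) - 4 ∧
      (fib n : ℤ) * (fib (n - 6) : ℤ) - 4 < (fib n : ℤ) * (fib (n - 3) : ℤ) + 1 ∧
      ((fib n : ℤ) ^ 2 - ((fib n : ℤ) * (fib (n - 3) : ℤ) + 1)) %
          ((fib n : ℤ) * (fib (n - 3) : ℤ) + 1) =
        (fib n : ℤ) * (fib (n - 6) : ℤ) - 4) ∧
    (11 ≤ n → Odd n →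
      (fib n : ℤ) ^ 2 - (2 * (fib n : ℤ) * (fib (n - 2) : ℤ) + 1) =
        4 * ((fib n : ℤ) * (fib (n - 6) : ℤ) + 4) + ((fib n : ℤ) * (fib (n - 9) : ℤ) - 17) ∧
      0 < (fib n : ℤ) * (fib (n - 9) : ℤ) - 17 ∧
      (fib n : ℤ) * (fib (n - 9) : ℤ) - 17 < (fib n : ℤ) * (fib (n - 6) : ℤ) + 4 ∧
      ((fib n : ℤ) ^ 2 - (2 * (fib n : ℤ) * (fib (n - 2) : ℤ) + 1)) %
          ((fib n : ℤ) * (fib (n - 6) : ℤ) + 4) =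
        (fib n : ℤ) * (fib (n - 9) : ℤ) - 17) := by
  constructor
  · intro h8 _
    obtain ⟨m, rfl⟩ : ∃ m, n = m + 8 := ⟨n - 8, by omega⟩
    rw [show m + 8 - 3 = m + 5 by omega, show m + 8 - 6 = m + 2 by omega,
      fibZ8, fibZ5, fibZ2]
    have ha : (0:ℤ) ≤ fib m := Int.ofNat_nonneg _
    have hb : (1:ℤ) ≤ fib (m+1) := by exact_mod_cast Nat.fib_pos.2 (Nat.succ_pos m)
    set a := (fib m : ℤ)
    set b := (fib (m+1) : ℤ)
    refine ⟨by ring, by nlinarith, by nlinarith, ?_⟩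
    rw [show (13*a+21*b)^2 - ((13*a+21*b)*(3*a+5*b)+1)
        = ((13*a+21*b)*(a+b)-4) + ((13*a+21*b)*(3*a+5*b)+1)*3 by ring,
      Int.add_mul_emod_self_left, Int.emod_eq_of_lt (by nlinarith) (by nlinarith)]
  · intro h11 _
    obtain ⟨m, rfl⟩ : ∃ m, n = m + 11 := ⟨n - 11, by omega⟩
    rw [show m + 11 - 2 = m + 9 by omega, show m + 11 - 6 = m + 5 by omega,
      show m + 11 - 9 = m + 2 by omega, fibZ11, fibZ9, fibZ5, fibZ2]
    have ha : (0:ℤ) ≤ fib m := Int.ofNat_nonneg _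
    have hb : (1:ℤ) ≤ fib (m+1) := by exact_mod_cast Nat.fib_pos.2 (Nat.succ_pos m)
    set a := (fib m : ℤ)
    set b := (fib (m+1) : ℤ)
    refine ⟨by ring, by nlinarith, by nlinarith, ?_⟩
    rw [show (55*a+89*b)^2 - (2*(55*a+89*b)*(21*a+34*b)+1)
        = ((55*a+89*b)*(a+b)-17) + ((55*a+89*b)*(3*a+5*b)+4)*4 by ring,
      Int.add_mul_emod_self_left, Int.emod_eq_of_lt (by nlinarith) (by nlinarith)]
end
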